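/- Let (X, τ) be an elcs with flc topology τ_F. The following are equivalent: (1) every equicontinuous subset of X* with respect to τ is equicontinuous with respect to τ_F; (2) every τ-equicontinuous subset of X* is pointwise bounded; (3) every neighborhood U of 0 in (X, τ) satisfies 0 ∈ Core(U); (4) X = X_fin, i.e., (X, τ) is a locally convex space. -/

import Mathlib

open scoped ENNReal Pointwise
open TopologicalSpace

section ElcsDefs

variable {X : Type*} [AddCommGroup X] [Module ℝ X]

/-- An extended seminorm: absolutely homogeneous (with `∞·0 = 0` conventions of `ℝ≥0∞`)
and subadditive map into `[0,∞]`. -/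
def IsExtSeminorm (ρ : X → ℝ≥0∞) : Prop :=
  (∀ (a : ℝ) (x : X), ρ (a • x) = ENNReal.ofReal |a| * ρ x) ∧
  (∀ x y : X, ρ (x + y) ≤ ρ x + ρ y)

/-- An extended norm is a definite extended seminorm. -/
def IsExtNorm (ρ : X → ℝ≥0∞) : Prop :=
  IsExtSeminorm ρ ∧ ∀ x : X, ρ x = 0 → x = 0

/-- The topology induced by a family of extended seminorms: generated by all balls. -/
def elcsTopology (P : Set (X → ℝ≥0∞)) : TopologicalSpace X :=
  TopologicalSpace.generateFrom
    {s | ∃ ρ ∈ P, ∃ c : X, ∃ ε : ℝ≥0∞, 0 < ε ∧ s = {x | ρ (x - c) < ε}}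

/-- `(X, t)` is an extended locally convex space with defining family `P`. -/
def IsELCS (t : TopologicalSpace X) (P : Set (X → ℝ≥0∞)) : Prop :=
  (∀ ρ ∈ P, IsExtSeminorm ρ) ∧ t = elcsTopology P

theorem IsExtSeminorm.map_zero {ρ : X → ℝ≥0∞} (h : IsExtSeminorm ρ) : ρ 0 = 0 := by
  have h0 := h.1 0 0
  simpa using h0

/-- The finiteness subspace `X_fin^ρ = {x : ρ x < ∞}` of an extended seminorm. -/
def finSubmodule {ρ : X → ℝ≥0∞} (h : IsExtSeminorm ρ) : Submodule ℝ X where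
  carrier := {x | ρ x < ⊤}
  add_mem' := fun {x y} hx hy =>
    lt_of_le_of_lt (h.2 x y) (ENNReal.add_lt_top.2 ⟨hx, hy⟩)
  zero_mem' := by simp [Set.mem_setOf_eq, h.map_zero]
  smul_mem' := fun a x hx => by
    simp only [Set.mem_setOf_eq, h.1 a x]
    exact ENNReal.mul_lt_top ENNReal.ofReal_lt_top hx

/-- The finite subspace `X_fin` of an elcs: points where every continuous extended
seminorm is finite. -/
def XfinSubmodule (t : TopologicalSpace X) : Submodule ℝ X where
  carrier := {x | ∀ ρ : X → ℝ≥0∞, IsExtSeminorm ρ → @Continuous X ℝ≥0∞ t _ ρ → ρ x < ⊤}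
  add_mem' := fun {x y} hx hy ρ hρ hc =>
    lt_of_le_of_lt (hρ.2 x y) (ENNReal.add_lt_top.2 ⟨hx ρ hρ hc, hy ρ hρ hc⟩)
  zero_mem' := by
    intro ρ hρ _
    rw [hρ.map_zero]
    exact ENNReal.zero_lt_top
  smul_mem' := fun a x hx ρ hρ hc => by
    have h1 := hρ.1 a x
    rw [h1]
    exact ENNReal.mul_lt_top ENNReal.ofReal_lt_top (hx ρ hρ hc)

/-- The continuous dual of `(X, t)` as a submodule of the linear dual. -/
noncomputable def dualSubmodule (t : TopologicalSpace X) : Submodule ℝ (X →ₗ[ℝ] ℝ) where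
  carrier := {f | @Continuous X ℝ t _ fun x => f x}
  add_mem' := by
    intro f g hf hg
    simp only [Set.mem_setOf_eq, LinearMap.add_apply] at *
    exact hf.add hg
  zero_mem' := by
    simp only [Set.mem_setOf_eq, LinearMap.zero_apply]
    exact @continuous_const X ℝ t _ 0
  smul_mem' := by
    intro c f hf
    simp only [Set.mem_setOf_eq, LinearMap.smul_apply, smul_eq_mul] at *
    exact (@continuous_const X ℝ t _ c).mul hf

/-- The weak topology of `(X, t)`: the initial topology induced by the continuous dual. -/
def weakTopology (t : TopologicalSpace X) : TopologicalSpace X :=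
  ⨅ f : ↥(dualSubmodule t), TopologicalSpace.induced (fun x => f.1 x) inferInstance

/-- The weak* topology on the dual of `(X, t)`: pointwise convergence on `X`. -/
def weakStarTopology (t : TopologicalSpace X) : TopologicalSpace ↥(dualSubmodule t) :=
  ⨅ x : X, TopologicalSpace.induced (fun f : ↥(dualSubmodule t) => f.1 x) inferInstance

/-- `tF` is the finest locally convex (vector) topology on `X` coarser than `t`. -/
def IsFlcTopology (t tF : TopologicalSpace X) : Prop :=
  t ≤ tF ∧ @IsTopologicalAddGroup X tF _ ∧ @ContinuousSMul ℝ X _ _ tF ∧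
    @LocallyConvexSpace ℝ X _ _ _ _ tF ∧
    ∀ t' : TopologicalSpace X, t ≤ t' → @IsTopologicalAddGroup X t' _ →
      @ContinuousSMul ℝ X _ _ t' → @LocallyConvexSpace ℝ X _ _ _ _ t' → tF ≤ t'

/-- A set `A` is bounded in an elcs: for every neighborhood `U` of `0` there are `r > 0`
and a finite `F ⊆ A` with `A ⊆ F + r • U`. -/
def ElcsBounded (t : TopologicalSpace X) (A : Set X) : Prop :=
  ∀ U ∈ @nhds X t 0, ∃ r : ℝ, 0 < r ∧ ∃ F : Set X, F.Finite ∧ F ⊆ A ∧ A ⊆ F + r • U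

/-- `0 ∈ Core U`: `U` absorbs every point of `X`. -/
def ZeroInCore (U : Set X) : Prop :=
  ∀ x : X, ∃ δ : ℝ, 0 < δ ∧ ∀ s : ℝ, 0 ≤ s → s ≤ δ → s • x ∈ U

/-- A family of linear functionals is equicontinuous on `(X, t)` if it is uniformly bounded
by `1` on some neighborhood of `0`. -/
def EquicontSet (t : TopologicalSpace X) (A : Set (X →ₗ[ℝ] ℝ)) : Prop :=
  ∃ U ∈ @nhds X t 0, ∀ f ∈ A, ∀ x ∈ U, |f x| ≤ 1

/-- The extended-seminorm-valued sup functional `ρ_A(x) = sup_{f ∈ A} |f x|`. -/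
noncomputable def dualSupFun (A : Set (X →ₗ[ℝ] ℝ)) : X → ℝ≥0∞ :=
  fun x => ⨆ f ∈ A, ENNReal.ofReal |f x|

/-- The topology on the dual of uniform convergence on members of a family `𝔅` of subsets
of `X`. -/
def ucTopology (t : TopologicalSpace X) (𝔅 : Set (Set X)) :
    TopologicalSpace ↥(dualSubmodule t) :=
  TopologicalSpace.generateFrom
    {s | ∃ B ∈ 𝔅, ∃ g : ↥(dualSubmodule t), ∃ ε : ℝ≥0∞, 0 < ε ∧
      s = {f | (⨆ x ∈ B, ENNReal.ofReal |f.1 x - g.1 x|) < ε}}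

/-- A vector topology is normable if it is induced by a single everywhere-finite
extended norm, i.e. by a norm. -/
def IsNormableTop {Y : Type*} [AddCommGroup Y] [Module ℝ Y] (t : TopologicalSpace Y) : Prop :=
  ∃ ρ : Y → ℝ≥0∞, IsExtNorm ρ ∧ (∀ y, ρ y < ⊤) ∧ t = elcsTopology {ρ}

/-- `Y` has countable (algebraic) dimension over `ℝ`. -/
def HasCountableDim (Y : Type*) [AddCommGroup Y] [Module ℝ Y] : Prop :=
  ∃ s : Set Y, s.Countable ∧ Submodule.span ℝ s = ⊤

/-- The Minkowski functional of a set, with values in `[0,∞]` (`inf ∅ = ∞`). -/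
noncomputable def minkowskiE (U : Set X) : X → ℝ≥0∞ :=
  fun x => sInf (ENNReal.ofReal '' {r : ℝ | 0 < r ∧ x ∈ r • U})

end ElcsDefs

section FunctionSpaces

variable {Y : Type*} [TopologicalSpace Y]

/-- The subspace of continuous functions that are bounded on `B`. -/
def boundedOnSubmodule (B : Set Y) : Submodule ℝ C(Y, ℝ) where
  carrier := {f | ∃ M : ℝ, ∀ x ∈ B, |f x| ≤ M}
  add_mem' := by
    rintro f g ⟨M, hM⟩ ⟨N, hN⟩
    exact ⟨M + N, fun x hx => (abs_add_le _ _).trans (add_le_add (hM x hx) (hN x hx))⟩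
  zero_mem' := ⟨0, by simp⟩
  smul_mem' := by
    rintro c f ⟨M, hM⟩
    refine ⟨|c| * M, fun x hx => ?_⟩
    simp only [ContinuousMap.smul_apply, smul_eq_mul, abs_mul]
    exact mul_le_mul_of_nonneg_left (hM x hx) (abs_nonneg c)

/-- The sup extended seminorm `ρ_B` on `C(Y, ℝ)` associated to `B ⊆ Y`. -/
noncomputable def supExtSeminorm (B : Set Y) : C(Y, ℝ) → ℝ≥0∞ :=
  fun f => ⨆ x ∈ B, ENNReal.ofReal |f x|

end FunctionSpaces


section Stmt14Aux

open Filter Topology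

variable {X : Type*} [AddCommGroup X] [Module ℝ X] {P : Set (X → ℝ≥0∞)}

private lemma extNeg {ρ : X → ℝ≥0∞} (h : IsExtSeminorm ρ) (x : X) : ρ (-x) = ρ x := by
  have h1 := h.1 (-1) x
  simpa using h1

private lemma ball_isOpen {ρ : X → ℝ≥0∞} (hρ : ρ ∈ P) (c : X) (ε : ℝ≥0∞) (hε : 0 < ε) :
    IsOpen[elcsTopology P] {x | ρ (x - c) < ε} :=
  TopologicalSpace.isOpen_generateFrom_of_mem ⟨ρ, hρ, c, ε, hε, rfl⟩

private lemma ball_mem_nhds (hP : ∀ ρ ∈ P, IsExtSeminorm ρ) {ρ : X → ℝ≥0∞} (hρ : ρ ∈ P)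
    (c : X) {ε : ℝ≥0∞} (hε : 0 < ε) :
    {x | ρ (x - c) < ε} ∈ @nhds X (elcsTopology P) c := by
  letI := elcsTopology P
  refine (ball_isOpen hρ c ε hε).mem_nhds ?_
  show ρ (c - c) < ε
  rw [sub_self, (hP ρ hρ).map_zero]
  exact hε

private lemma affine_cont (hP : ∀ ρ ∈ P, IsExtSeminorm ρ) {a : ℝ} (ha : a ≠ 0) (b : X) :
    Continuous[elcsTopology P, elcsTopology P] (fun x => a • x + b) := by
  letI := elcsTopology P
  apply continuous_generateFrom_iff.mpr
  rintro s ⟨ρ, hρ, c, ε, hε, rfl⟩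
  have hρs := hP ρ hρ
  have hoa : ENNReal.ofReal |a| ≠ 0 := (ENNReal.ofReal_pos.mpr (abs_pos.mpr ha)).ne'
  have key : (fun x : X => a • x + b) ⁻¹' {x | ρ (x - c) < ε}
      = {x | ρ (x - a⁻¹ • (c - b)) < ε / ENNReal.ofReal |a|} := by
    ext x
    simp only [Set.mem_preimage, Set.mem_setOf_eq]
    have h1 : a • x + b - c = a • (x - a⁻¹ • (c - b)) := by
      rw [smul_sub, smul_smul, mul_inv_cancel₀ ha, one_smul]
      abel
    rw [h1, hρs.1 a, ENNReal.lt_div_iff_mul_lt (Or.inl hoa) (Or.inl ENNReal.ofReal_ne_top), mul_comm]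
  rw [key]
  exact ball_isOpen hρ _ _ (ENNReal.div_pos hε.ne' ENNReal.ofReal_ne_top)

private lemma affine_image_mem_nhds (hP : ∀ ρ ∈ P, IsExtSeminorm ρ) {U : Set X}
    (hU : U ∈ @nhds X (elcsTopology P) 0) {a : ℝ} (ha : a ≠ 0) (c : X) :
    {y : X | a⁻¹ • (y - c) ∈ U} ∈ @nhds X (elcsTopology P) c := by
  letI := elcsTopology P
  obtain ⟨U₀, hU₀U, hU₀o, hU₀0⟩ := mem_nhds_iff.mp hU
  have hcont : Continuous fun y : X => a⁻¹ • y + (-(a⁻¹ • c)) :=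
    affine_cont hP (inv_ne_zero ha) _
  have heq : (fun y : X => a⁻¹ • y + (-(a⁻¹ • c))) = fun y : X => a⁻¹ • (y - c) := by
    funext y
    rw [smul_sub]
    abel
  rw [heq] at hcont
  refine Filter.mem_of_superset (((hcont.isOpen_preimage U₀ hU₀o)).mem_nhds ?_) ?_
  · show a⁻¹ • ((c : X) - c) ∈ U₀
    rw [sub_self, smul_zero]
    exact hU₀0
  · exact fun y hy => hU₀U hy

private lemma rho_cont (hP : ∀ ρ ∈ P, IsExtSeminorm ρ) {ρ : X → ℝ≥0∞} (hρ : ρ ∈ P) :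
    @Continuous X ℝ≥0∞ (elcsTopology P) _ ρ := by
  letI := elcsTopology P
  have hρs := hP ρ hρ
  rw [continuous_iff_continuousAt]
  intro x₀
  by_cases htop : ρ x₀ = ⊤
  · have hev : ρ =ᶠ[nhds x₀] fun _ => (⊤ : ℝ≥0∞) := by
      filter_upwards [ball_mem_nhds hP hρ x₀ (ε := 1) one_pos] with x hx
      by_contra hne
      have hxe : x + (x₀ - x) = x₀ := by abel
      have h2 : ρ x₀ ≤ ρ x + ρ (x₀ - x) := by
        conv_lhs => rw [← hxe]
        exact hρs.2 x (x₀ - x)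
      have h3 : ρ (x₀ - x) = ρ (x - x₀) := by rw [← neg_sub, extNeg hρs]
      have h4 : ρ x + ρ (x₀ - x) < ⊤ :=
        ENNReal.add_lt_top.mpr ⟨lt_top_iff_ne_top.mpr hne, h3 ▸ (hx.trans_le le_top)⟩
      exact absurd (htop ▸ h2) (not_le.mpr h4)
    have hconst : Filter.Tendsto (fun _ : X => (⊤ : ℝ≥0∞)) (nhds x₀) (nhds (ρ x₀)) := by
      rw [htop]
      exact tendsto_const_nhds
    exact (Filter.tendsto_congr' hev).mpr hconst
  · rw [ContinuousAt, ENNReal.tendsto_nhds htop]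
    intro ε hε
    filter_upwards [ball_mem_nhds hP hρ x₀ hε] with x hx
    have h3 : ρ (x₀ - x) = ρ (x - x₀) := by rw [← neg_sub, extNeg hρs]
    constructor
    · refine tsub_le_iff_right.mpr ?_
      have hxe : x + (x₀ - x) = x₀ := by abel
      calc ρ x₀ ≤ ρ x + ρ (x₀ - x) := by
            conv_lhs => rw [← hxe]
            exact hρs.2 x (x₀ - x)
        _ ≤ ρ x + ε := add_le_add_right (h3 ▸ hx.le) _
    · have hxe : x₀ + (x - x₀) = x := by abel
      calc ρ x ≤ ρ x₀ + ρ (x - x₀) := by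
            conv_lhs => rw [← hxe]
            exact hρs.2 x₀ (x - x₀)
        _ ≤ ρ x₀ + ε := add_le_add_right hx.le _

private lemma small_smul {v : ℝ≥0∞} (hv : v ≠ ⊤) {g : ℝ≥0∞} (hg : 0 < g) :
    ∃ δ : ℝ, 0 < δ ∧ ∀ s : ℝ, 0 ≤ s → s ≤ δ → ENNReal.ofReal s * v < g := by
  rcases eq_or_ne v 0 with rfl | hv0
  · exact ⟨1, one_pos, fun s _ _ => by simpa using hg⟩
  · have hdiv : 0 < g / v := ENNReal.div_pos hg.ne' hv
    obtain ⟨c, hc0, hclt⟩ := exists_between hdiv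
    have hd0 : min c 1 ≠ 0 := (lt_min hc0 zero_lt_one).ne'
    have hdt : min c 1 ≠ ⊤ := ((min_le_right c 1).trans_lt ENNReal.one_lt_top).ne
    refine ⟨(min c 1).toReal, ENNReal.toReal_pos hd0 hdt, fun s hs0 hsd => ?_⟩
    have h1 : ENNReal.ofReal s ≤ min c 1 := by
      rw [← ENNReal.ofReal_toReal hdt]
      exact ENNReal.ofReal_le_ofReal hsd
    calc ENNReal.ofReal s * v ≤ min c 1 * v := mul_le_mul_left h1 v
      _ < g := ENNReal.mul_lt_of_lt_div ((min_le_left c 1).trans_lt hclt)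

private lemma core_ball (hP : ∀ ρ ∈ P, IsExtSeminorm ρ)
    (hfin : XfinSubmodule (elcsTopology P) = ⊤) {ρ : X → ℝ≥0∞} (hρ : ρ ∈ P) {c : X}
    {ε : ℝ≥0∞} (h0 : ρ ((0 : X) - c) < ε) (x : X) :
    ∃ δ : ℝ, 0 < δ ∧ ∀ s : ℝ, 0 ≤ s → s ≤ δ → ρ (s • x - c) < ε := by
  have hρs := hP ρ hρ
  have hx : x ∈ XfinSubmodule (elcsTopology P) := by rw [hfin]; exact Submodule.mem_top
  have hxfin : ρ x ≠ ⊤ := (hx ρ hρs (rho_cont hP hρ)).ne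
  have h0' : ρ (-c) < ε := by rwa [zero_sub] at h0
  have hcne : ρ (-c) ≠ ⊤ := (h0'.trans_le le_top).ne
  obtain ⟨r, hr0, hrlt⟩ := ENNReal.lt_iff_exists_add_pos_lt.mp h0'
  obtain ⟨δ, hδ0, hδ⟩ := small_smul hxfin (show (0 : ℝ≥0∞) < r by exact_mod_cast hr0)
  refine ⟨δ, hδ0, fun s hs0 hsδ => ?_⟩
  calc ρ (s • x - c) ≤ ρ (s • x) + ρ (-c) := by
        rw [sub_eq_add_neg]
        exact hρs.2 _ _
    _ = ENNReal.ofReal s * ρ x + ρ (-c) := by rw [hρs.1 s x, abs_of_nonneg hs0]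
    _ < ↑r + ρ (-c) := ENNReal.add_lt_add_right hcne (hδ s hs0 hsδ)
    _ ≤ ε := by
        rw [add_comm]
        exact hrlt.le

private lemma core_sInter (hP : ∀ ρ ∈ P, IsExtSeminorm ρ)
    (hfin : XfinSubmodule (elcsTopology P) = ⊤) (F : Set (Set X)) (hFfin : F.Finite) :
    F ⊆ {s | ∃ ρ ∈ P, ∃ c : X, ∃ ε : ℝ≥0∞, 0 < ε ∧ s = {x | ρ (x - c) < ε}} →
    (0 : X) ∈ ⋂₀ F → ∀ x : X, ∃ δ : ℝ, 0 < δ ∧ ∀ s : ℝ, 0 ≤ s → s ≤ δ → s • x ∈ ⋂₀ F := by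
  refine Set.Finite.induction_on F hFfin ?_ ?_
  · exact fun _ _ x => ⟨1, one_pos, fun s _ _ => by simp⟩
  · intro b F hbF hFfin ih hsub h0 x
    rw [Set.sInter_insert] at h0
    obtain ⟨h0b, h0F⟩ := h0
    obtain ⟨δ₁, hδ₁, h1⟩ := ih (fun s hs => hsub (Set.mem_insert_of_mem _ hs)) h0F x
    obtain ⟨ρ, hρ, c, ε, hε, hb⟩ := hsub (Set.mem_insert b F)
    subst hb
    obtain ⟨δ₂, hδ₂, h2⟩ := core_ball hP hfin hρ h0b x
    refine ⟨min δ₁ δ₂, lt_min hδ₁ hδ₂, fun s hs0 hsm => ?_⟩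
    rw [Set.sInter_insert]
    exact ⟨h2 s hs0 (hsm.trans (min_le_right _ _)), h1 s hs0 (hsm.trans (min_le_left _ _))⟩

private lemma core_of_fin (hP : ∀ ρ ∈ P, IsExtSeminorm ρ)
    (hfin : XfinSubmodule (elcsTopology P) = ⊤) :
    ∀ U ∈ @nhds X (elcsTopology P) 0, ZeroInCore U := by
  letI := elcsTopology P
  intro U hU
  have hbasis := TopologicalSpace.isTopologicalBasis_of_subbasis
    (rfl : (elcsTopology P : TopologicalSpace X) = TopologicalSpace.generateFrom _)
  obtain ⟨V, hVb, hV0, hVU⟩ := hbasis.mem_nhds_iff.mp hU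
  obtain ⟨F, ⟨hFfin, hFsub⟩, rfl⟩ := hVb
  intro x
  obtain ⟨δ, hδ, hh⟩ := core_sInter hP hfin F hFfin hFsub hV0 x
  exact ⟨δ, hδ, fun s hs1 hs2 => hVU (hh s hs1 hs2)⟩

private lemma fin_of_core (hP : ∀ ρ ∈ P, IsExtSeminorm ρ)
    (hcore : ∀ U ∈ @nhds X (elcsTopology P) 0, ZeroInCore U) :
    XfinSubmodule (elcsTopology P) = ⊤ := by
  letI := elcsTopology P
  rw [Submodule.eq_top_iff']
  intro x
  show ∀ ρ : X → ℝ≥0∞, IsExtSeminorm ρ → Continuous ρ → ρ x < ⊤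
  intro ρ hρ hcont
  have hU : ρ ⁻¹' Set.Iio 1 ∈ nhds (0 : X) := by
    refine (hcont.isOpen_preimage _ isOpen_Iio).mem_nhds ?_
    show ρ 0 < 1
    rw [hρ.map_zero]
    exact zero_lt_one
  obtain ⟨δ, hδ0, hδ⟩ := hcore _ hU x
  have h1 : ρ (δ • x) < 1 := hδ δ hδ0.le le_rfl
  rw [hρ.1 δ x, abs_of_pos hδ0] at h1
  by_contra htop
  rw [not_lt, top_le_iff] at htop
  rw [htop, ENNReal.mul_top ((ENNReal.ofReal_pos.mpr hδ0).ne')] at h1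
  exact absurd h1 (by simp)

private lemma pb (hP : ∀ ρ ∈ P, IsExtSeminorm ρ)
    (hfin : XfinSubmodule (elcsTopology P) = ⊤) {A : Set (X →ₗ[ℝ] ℝ)}
    (hA : EquicontSet (elcsTopology P) A) (x : X) : ∃ M : ℝ, ∀ f ∈ A, |f x| ≤ M := by
  obtain ⟨U, hU, hbd⟩ := hA
  obtain ⟨δ, hδ0, hδ⟩ := core_of_fin hP hfin U hU x
  refine ⟨1 / δ, fun f hf => ?_⟩
  have h1 : |f (δ • x)| ≤ 1 := hbd f hf _ (hδ δ hδ0.le le_rfl)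
  rw [map_smul, smul_eq_mul, abs_mul, abs_of_pos hδ0] at h1
  rw [le_div_iff₀ hδ0, mul_comm]
  exact h1

private lemma bad_functional (hP : ∀ ρ ∈ P, IsExtSeminorm ρ)
    (hnfin : XfinSubmodule (elcsTopology P) ≠ ⊤) :
    ∃ g : X →ₗ[ℝ] ℝ, ∃ x₀ : X, g x₀ = 1 ∧
      ∃ U ∈ @nhds X (elcsTopology P) 0, ∀ x ∈ U, g x = 0 := by
  letI := elcsTopology P
  rw [Ne, Submodule.eq_top_iff'] at hnfin
  push_neg at hnfin
  obtain ⟨x₀, hx₀⟩ := hnfin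
  have hx₀' : ∃ ρ : X → ℝ≥0∞, IsExtSeminorm ρ ∧ Continuous ρ ∧ ρ x₀ = ⊤ := by
    by_contra hc
    push_neg at hc
    exact hx₀ (fun ρ hρ hcont => lt_top_iff_ne_top.mpr (hc ρ hρ hcont))
  obtain ⟨ρ, hρ, hcont, htop⟩ := hx₀'
  have hx₀Y : x₀ ∉ finSubmodule hρ := by
    intro h
    have h2 : ρ x₀ < ⊤ := h
    rw [htop] at h2
    exact lt_irrefl _ h2
  obtain ⟨f, hfx₀, hfY⟩ := Submodule.exists_dual_map_eq_bot_of_notMem hx₀Y inferInstance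
  refine ⟨(f x₀)⁻¹ • f, x₀, ?_, ρ ⁻¹' Set.Iio 1, ?_, ?_⟩
  · simp [inv_mul_cancel₀ hfx₀]
  · refine (hcont.isOpen_preimage _ isOpen_Iio).mem_nhds ?_
    show ρ 0 < 1
    rw [hρ.map_zero]
    exact zero_lt_one
  · intro x hx
    have hxY : x ∈ finSubmodule hρ := show ρ x < ⊤ from hx.trans_le le_top
    have hfx : f x = 0 := by
      have hmem : f x ∈ (finSubmodule hρ).map f := Submodule.mem_map_of_mem hxY
      rw [hfY] at hmem
      exact (Submodule.mem_bot ℝ).mp hmem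
    simp [hfx]

private lemma pball_mem_nhds (hP : ∀ ρ ∈ P, IsExtSeminorm ρ) {U : Set X}
    (hU : U ∈ @nhds X (elcsTopology P) 0) (pS : Seminorm ℝ X) (hU1 : ∀ y ∈ U, pS y ≤ 1)
    (c x : X) {r : ℝ} (hx : pS (x - c) < r) :
    {y : X | pS (y - c) < r} ∈ @nhds X (elcsTopology P) x := by
  set a : ℝ := (r - pS (x - c)) / 2 with ha
  have ha0 : 0 < a := half_pos (sub_pos.mpr hx)
  refine Filter.mem_of_superset (affine_image_mem_nhds hP hU ha0.ne' x) ?_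
  intro y hy
  have hyU : a⁻¹ • (y - x) ∈ U := hy
  have hkey : y - c = x - c + a • (a⁻¹ • (y - x)) := by
    rw [smul_smul, mul_inv_cancel₀ ha0.ne', one_smul]
    abel
  show pS (y - c) < r
  rw [hkey]
  calc pS (x - c + a • (a⁻¹ • (y - x)))
      ≤ pS (x - c) + pS (a • (a⁻¹ • (y - x))) := map_add_le_add pS _ _
    _ = pS (x - c) + |a| * pS (a⁻¹ • (y - x)) := by
        rw [map_smul_eq_mul, Real.norm_eq_abs]
    _ ≤ pS (x - c) + a * 1 := by
        rw [abs_of_pos ha0]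
        exact add_le_add_right (mul_le_mul_of_nonneg_left (hU1 _ hyU) ha0.le) _
    _ < r := by
        rw [mul_one, ha]
        linarith

private lemma equicont_flc (hP : ∀ ρ ∈ P, IsExtSeminorm ρ)
    (hfin : XfinSubmodule (elcsTopology P) = ⊤) {tF : TopologicalSpace X}
    (hF : IsFlcTopology (elcsTopology P) tF) {A : Set (X →ₗ[ℝ] ℝ)}
    (hA : EquicontSet (elcsTopology P) A) : EquicontSet tF A := by
  classical
  obtain ⟨U, hU, hbd⟩ := hA
  set ρA : X → ℝ≥0∞ := fun x => ⨆ f ∈ A, ENNReal.ofReal |f x| with hρA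
  have hfinA : ∀ x, ρA x ≠ ⊤ := by
    intro x
    obtain ⟨M, hM⟩ := pb hP hfin ⟨U, hU, hbd⟩ x
    have hb : ρA x ≤ ENNReal.ofReal M :=
      iSup₂_le fun f hf => ENNReal.ofReal_le_ofReal (hM f hf)
    exact (hb.trans_lt ENNReal.ofReal_lt_top).ne
  have hle : ∀ f ∈ A, ∀ x : X, ENNReal.ofReal |f x| ≤ ρA x := fun f hf x =>
    le_iSup₂ (f := fun g (_ : g ∈ A) => ENNReal.ofReal |g x|) f hf
  have habs : ∀ f ∈ A, ∀ x : X, |f x| ≤ (ρA x).toReal := by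
    intro f hf x
    calc |f x| = (ENNReal.ofReal |f x|).toReal := (ENNReal.toReal_ofReal (abs_nonneg _)).symm
      _ ≤ (ρA x).toReal := ENNReal.toReal_mono (hfinA x) (hle f hf x)
  have hsmul : ∀ (a : ℝ) (x : X), ρA (a • x) = ENNReal.ofReal |a| * ρA x := by
    intro a x
    simp only [hρA, map_smul, smul_eq_mul, abs_mul, ENNReal.ofReal_mul (abs_nonneg a),
      ENNReal.mul_iSup]
  have hzero : ρA 0 = 0 := by
    have h := hsmul 0 0
    simpa using h
  have hadd : ∀ x y : X, ρA (x + y) ≤ ρA x + ρA y := by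
    intro x y
    refine iSup₂_le fun f hf => ?_
    calc ENNReal.ofReal |f (x + y)|
        ≤ ENNReal.ofReal (|f x| + |f y|) := ENNReal.ofReal_le_ofReal
          (by rw [map_add]; exact abs_add_le _ _)
      _ = ENNReal.ofReal |f x| + ENNReal.ofReal |f y| :=
          ENNReal.ofReal_add (abs_nonneg _) (abs_nonneg _)
      _ ≤ ρA x + ρA y := add_le_add (hle f hf x) (hle f hf y)
  have hU1 : ∀ x ∈ U, ρA x ≤ 1 := by
    intro x hx
    refine iSup₂_le fun f hf => ?_
    calc ENNReal.ofReal |f x| ≤ ENNReal.ofReal 1 := ENNReal.ofReal_le_ofReal (hbd f hf x hx)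
      _ = 1 := ENNReal.ofReal_one
  set pS : Seminorm ℝ X :=
    { toFun := fun x => (ρA x).toReal
      map_zero' := by show (ρA 0).toReal = 0; rw [hzero]; simp
      add_le' := fun x y => by
        show (ρA (x + y)).toReal ≤ (ρA x).toReal + (ρA y).toReal
        calc (ρA (x + y)).toReal ≤ (ρA x + ρA y).toReal :=
              ENNReal.toReal_mono (by simp [ENNReal.add_ne_top, hfinA]) (hadd x y)
          _ = (ρA x).toReal + (ρA y).toReal := ENNReal.toReal_add (hfinA x) (hfinA y)
      neg' := fun x => by
        show (ρA (-x)).toReal = (ρA x).toReal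
        have h := hsmul (-1) x
        rw [neg_one_smul] at h
        rw [h]
        simp
      smul' := fun a x => by
        show (ρA (a • x)).toReal = ‖a‖ * (ρA x).toReal
        rw [hsmul a x, ENNReal.toReal_mul, ENNReal.toReal_ofReal (abs_nonneg a),
          Real.norm_eq_abs] } with hpS
  have hpS1 : ∀ y ∈ U, pS y ≤ 1 := by
    intro y hy
    have h := ENNReal.toReal_mono ENNReal.one_ne_top (hU1 y hy)
    exact h
  set pfam : SeminormFamily ℝ X (Fin 1) := fun _ => pS with hpfam
  letI t' : TopologicalSpace X := pfam.moduleFilterBasis.topology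
  have hWS : WithSeminorms pfam := ⟨rfl⟩
  have htag : @IsTopologicalAddGroup X t' _ := hWS.topologicalAddGroup
  have hsm : @ContinuousSMul ℝ X _ _ t' := hWS.continuousSMul
  have hlc : @LocallyConvexSpace ℝ X _ _ _ _ t' := hWS.toLocallyConvexSpace
  have hle' : elcsTopology P ≤ t' := by
    rw [le_iff_nhds]
    intro x N hN
    obtain ⟨⟨s, r⟩, hr, hball⟩ := hWS.hasBasis_ball.mem_iff.mp hN
    have hsup : s.sup pfam ≤ pS := Finset.sup_le fun i _ => le_rfl
    have hsubset : pS.ball x r ⊆ (s.sup pfam).ball x r := Seminorm.ball_antitone hsup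
    refine Filter.mem_of_superset ?_ (hsubset.trans hball)
    have hxx : pS (x - x) < r := by
      rw [sub_self, map_zero]
      exact hr
    exact pball_mem_nhds hP hU pS hpS1 x x hxx
  have htF : tF ≤ t' := hF.2.2.2.2 t' hle' htag hsm hlc
  refine ⟨pS.ball 0 1, ?_, ?_⟩
  · have h1 : pS.ball 0 1 ∈ @nhds X t' 0 :=
      hWS.hasBasis.mem_of_mem (pfam.basisSets_singleton_mem 0 one_pos)
    exact (le_iff_nhds tF t').mp htF 0 h1
  · intro f hf x hx
    have hx1 : pS x < 1 := by rwa [Seminorm.mem_ball_zero] at hx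
    exact (habs f hf x).trans hx1.le

end Stmt14Aux

/-- equicontinuity characterizations of `X = X_fin`. -/
theorem stmt14 {X : Type*} [AddCommGroup X] [Module ℝ X]
    (t tF : TopologicalSpace X) (P : Set (X → ℝ≥0∞)) (hP : IsELCS t P)
    (hF : IsFlcTopology t tF) :
    ((∀ A : Set (X →ₗ[ℝ] ℝ), EquicontSet t A → EquicontSet tF A) ↔
        XfinSubmodule t = (⊤ : Submodule ℝ X)) ∧
    ((∀ A : Set (X →ₗ[ℝ] ℝ), EquicontSet t A →
        ∀ x : X, ∃ M : ℝ, ∀ f ∈ A, |f x| ≤ M) ↔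
        XfinSubmodule t = (⊤ : Submodule ℝ X)) ∧
    ((∀ U ∈ @nhds X t 0, ZeroInCore U) ↔
        XfinSubmodule t = (⊤ : Submodule ℝ X)) := by
  obtain ⟨hPsn, rfl⟩ := hP
  have badA : XfinSubmodule (elcsTopology P) ≠ (⊤ : Submodule ℝ X) →
      ∃ A : Set (X →ₗ[ℝ] ℝ), EquicontSet (elcsTopology P) A ∧
        ∃ x₀ : X, ∀ M : ℝ, ∃ f ∈ A, M < |f x₀| := by
    intro hne
    obtain ⟨g, x₀, hg1, U, hU, hg0⟩ := bad_functional hPsn hne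
    refine ⟨Set.range (fun n : ℕ => (n : ℝ) • g), ⟨U, hU, ?_⟩, x₀, ?_⟩
    · rintro f ⟨n, rfl⟩ x hx
      simp [hg0 x hx]
    · intro M
      obtain ⟨n, hn⟩ := exists_nat_gt (max M 0)
      refine ⟨(n : ℝ) • g, ⟨n, rfl⟩, ?_⟩
      have habs : |((n : ℝ) • g) x₀| = (n : ℝ) := by
        simp [hg1, abs_of_nonneg (by positivity : (0:ℝ) ≤ (n:ℝ))]
      rw [habs]
      exact lt_of_le_of_lt (le_max_left M 0) hn
  refine ⟨⟨?_, fun hfin A hA => equicont_flc hPsn hfin hF hA⟩,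
    ⟨?_, fun hfin A hA x => pb hPsn hfin hA x⟩,
    ⟨fin_of_core hPsn, core_of_fin hPsn⟩⟩
  · intro h1
    by_contra hne
    obtain ⟨A, hAeq, x₀, hAun⟩ := badA hne
    obtain ⟨V, hV, hbV⟩ := h1 A hAeq
    letI := tF
    haveI : ContinuousSMul ℝ X := hF.2.2.1
    have hcont : Continuous fun s : ℝ => s • x₀ := continuous_id.smul continuous_const
    have h0 : Filter.Tendsto (fun s : ℝ => s • x₀) (nhds 0) (nhds 0) := by
      have h := hcont.tendsto (0 : ℝ)
      simpa using h
    have hev : (fun s : ℝ => s • x₀) ⁻¹' V ∈ nhds (0 : ℝ) := h0 hV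
    obtain ⟨ε, hε0, hball⟩ := Metric.mem_nhds_iff.mp hev
    have hs0 : (0 : ℝ) < ε / 2 := half_pos hε0
    have hsV : (ε / 2) • x₀ ∈ V := by
      apply hball
      rw [Metric.mem_ball, dist_zero_right, Real.norm_eq_abs, abs_of_pos hs0]
      linarith
    obtain ⟨f, hfA, hfM⟩ := hAun (2 / ε)
    have hb := hbV f hfA _ hsV
    rw [map_smul, smul_eq_mul, abs_mul, abs_of_pos hs0] at hb
    have hgt : ε / 2 * (2 / ε) < ε / 2 * |f x₀| := mul_lt_mul_of_pos_left hfM hs0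
    have heq1 : ε / 2 * (2 / ε) = 1 := by field_simp
    rw [heq1] at hgt
    linarith
  · intro h2
    by_contra hne
    obtain ⟨A, hAeq, x₀, hAun⟩ := badA hne
    obtain ⟨M, hM⟩ := h2 A hAeq x₀
    obtain ⟨f, hfA, hfM⟩ := hAun M
    exact absurd (hM f hfA) (not_le.mpr hfM)
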